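/- Let n ∈ ℝ³ and Θ ∈ ℝ, and consider the matrix exponential exp(Θ·J(n)). (i) If ⟨n,n⟩ = −1, then exp(Θ J(n)) = I + sin Θ · J(n) + (1 − cos Θ) · J(n)². (ii) If ⟨n,n⟩ = +1, then exp(Θ J(n)) = I + sinh Θ · J(n) + (cosh Θ − 1) · J(n)². (iii) If ⟨n,n⟩ = 0, then J(n)³ = 0 and exp(J(n)) = I + J(n) + (1/2) J(n)². In all cases exp(Θ J(n)) n = n. -/

import Mathlib

open Matrix

noncomputable section

/-- Tangent metric `η_T = diag(-1,1,1)` on `ℝ³`. -/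
def etaT : Matrix (Fin 3) (Fin 3) ℝ := Matrix.diagonal ![-1, 1, 1]

/-- Tangent bilinear form `⟨u,w⟩ = uᵀ η_T w`. -/
def ipT (u w : Fin 3 → ℝ) : ℝ := u ⬝ᵥ (etaT *ᵥ w)

/-- The map `J : ℝ³ → M₃(ℝ)` implementing the Lorentzian cross product, `J(u)w = u × w`. -/
def Jmat (u : Fin 3 → ℝ) : Matrix (Fin 3) (Fin 3) ℝ :=
  !![0, u 2, -u 1; u 2, 0, -u 0; -u 1, u 0, 0]

attribute [local instance] Matrix.linftyOpNormedRing Matrix.linftyOpNormedAlgebra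

open NormedSpace in
lemma expKey (A : Matrix (Fin 3) (Fin 3) ℝ) (ε : ℝ) (hA : A ^ 3 = ε • A)
    (f g : ℝ → ℝ) (hf0 : f 0 = 0) (hg0 : g 0 = 0)
    (hf : ∀ t, HasDerivAt f (1 + ε * g t) t)
    (hg : ∀ t, HasDerivAt g (f t) t) (θ : ℝ) :
    exp (θ • A) = 1 + f θ • A + g θ • A ^ 2 := by
  set F : ℝ → Matrix (Fin 3) (Fin 3) ℝ :=
    fun t => exp (t • (-A)) * (1 + f t • A + g t • A ^ 2) with hF
  have hD : ∀ t, HasDerivAt F 0 t := by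
    intro t
    have h1 : HasDerivAt (fun t : ℝ => exp (t • (-A))) (exp (t • (-A)) * (-A)) t :=
      hasDerivAt_exp_smul_const (-A) t
    have h2 : HasDerivAt (fun t : ℝ => 1 + f t • A + g t • A ^ 2)
        ((1 + ε * g t) • A + f t • A ^ 2) t :=
      (((hf t).smul_const A).const_add 1).add ((hg t).smul_const (A ^ 2))
    have key : (-A) * (1 + f t • A + g t • A ^ 2) + ((1 + ε * g t) • A + f t • A ^ 2) = 0 := by
      have hA3 : A * A ^ 2 = ε • A := by rw [← pow_succ']; exact hA
      have hAA : A * A = A ^ 2 := (sq A).symm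
      rw [neg_mul, mul_add, mul_add, mul_one, mul_smul_comm, mul_smul_comm, hA3, hAA]
      module
    have h3 := h1.mul h2
    rw [mul_assoc, ← mul_add, key, mul_zero] at h3
    exact h3
  have hconst : F θ = F 0 :=
    is_const_of_deriv_eq_zero (fun t => (hD t).differentiableAt)
      (fun t => (hD t).deriv) θ 0
  have hF0 : F 0 = 1 := by simp [hF, hf0, hg0, NormedSpace.exp_zero]
  have hinv : exp (θ • A) * exp (θ • (-A)) = 1 := by
    rw [smul_neg]
    exact (exp_add_of_commute (Commute.refl (θ • A)).neg_right).symm.trans (by simp)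
  calc exp (θ • A) = exp (θ • A) * F θ := by rw [hconst, hF0, mul_one]
    _ = exp (θ • A) * exp (θ • (-A)) * (1 + f θ • A + g θ • A ^ 2) := by
        rw [hF]; rw [mul_assoc]
    _ = _ := by rw [hinv, one_mul]

lemma Jcube (n : Fin 3 → ℝ) : (Jmat n) ^ 3 = ipT n n • Jmat n := by
  ext i j
  fin_cases i <;> fin_cases j <;>
    simp [Jmat, ipT, etaT, pow_succ, Matrix.mul_apply, Fin.sum_univ_three,
      dotProduct, Matrix.mulVec, Matrix.diagonal] <;> ring

lemma JmulVec (n : Fin 3 → ℝ) : Jmat n *ᵥ n = 0 := by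
  funext i
  fin_cases i <;>
    simp [Jmat, Matrix.mulVec, dotProduct, Fin.sum_univ_three] <;> ring

/-- Closed forms of the exponential `exp(Θ J(n))` in the elliptic (`⟨n,n⟩ = -1`), hyperbolic
(`⟨n,n⟩ = +1`) and parabolic (`⟨n,n⟩ = 0`) cases, and invariance of the axis `n` in all
cases. -/
theorem exp_J_closed_form (n : Fin 3 → ℝ) (Θ : ℝ) :
    (ipT n n = -1 →
      NormedSpace.exp (Θ • Jmat n) =
        1 + Real.sin Θ • Jmat n + (1 - Real.cos Θ) • (Jmat n) ^ 2) ∧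
    (ipT n n = 1 →
      NormedSpace.exp (Θ • Jmat n) =
        1 + Real.sinh Θ • Jmat n + (Real.cosh Θ - 1) • (Jmat n) ^ 2) ∧
    (ipT n n = 0 →
      (Jmat n) ^ 3 = 0 ∧
      NormedSpace.exp (Jmat n) = 1 + Jmat n + (1/2 : ℝ) • (Jmat n) ^ 2) ∧
    (NormedSpace.exp (Θ • Jmat n)) *ᵥ n = n := by
  refine ⟨fun h => ?_, fun h => ?_, fun h => ⟨?_, ?_⟩, ?_⟩
  · refine expKey (Jmat n) (-1) ?_ Real.sin (fun t => 1 - Real.cos t) (by simp) (by simp)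
      (fun t => ?_) (fun t => by simpa using (Real.hasDerivAt_cos t).const_sub 1) Θ
    · rw [Jcube n, h]
    · convert Real.hasDerivAt_sin t using 1; ring
  · refine expKey (Jmat n) 1 ?_ Real.sinh (fun t => Real.cosh t - 1) (by simp) (by simp)
      (fun t => ?_) (fun t => by simpa using (Real.hasDerivAt_cosh t).sub_const 1) Θ
    · rw [Jcube n, h]
    · convert Real.hasDerivAt_sinh t using 1; ring
  · rw [Jcube n, h, zero_smul]
  · have := expKey (Jmat n) 0 (by rw [Jcube n, h]) id (fun t => t ^ 2 / 2) rfl (by norm_num)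
      (fun t => by simpa using hasDerivAt_id t)
      (fun t => by simpa using (hasDerivAt_pow 2 t).div_const 2) 1
    simpa using this
  · let L : Matrix (Fin 3) (Fin 3) ℝ →ₗ[ℝ] (Fin 3 → ℝ) :=
      { toFun := fun M => M *ᵥ n
        map_add' := fun M N => Matrix.add_mulVec M N n
        map_smul' := fun c M => by simp [Matrix.smul_mulVec] }
    have hD : ∀ t : ℝ, HasDerivAt (fun t : ℝ => L (NormedSpace.exp (t • Jmat n))) 0 t := by
      intro t
      have h1 := hasDerivAt_exp_smul_const (𝕂 := ℝ) (Jmat n) t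
      have h2 := L.toContinuousLinearMap.hasFDerivAt.comp_hasDerivAt t h1
      have h3 : HasDerivAt (fun t : ℝ => L (NormedSpace.exp (t • Jmat n)))
          ((NormedSpace.exp (t • Jmat n) * Jmat n) *ᵥ n) t := h2
      convert h3 using 1
      show (0 : Fin 3 → ℝ) = (NormedSpace.exp (t • Jmat n) * Jmat n) *ᵥ n
      rw [← Matrix.mulVec_mulVec, JmulVec n, Matrix.mulVec_zero]
    have hc : L (NormedSpace.exp (Θ • Jmat n)) = L (NormedSpace.exp ((0:ℝ) • Jmat n)) :=
      is_const_of_deriv_eq_zero (fun t => (hD t).differentiableAt)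
        (fun t => (hD t).deriv) Θ 0
    simpa [L, NormedSpace.exp_zero, Matrix.one_mulVec] using hc
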